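/- Let p ≥ 3 be an odd integer, let f_{p,2}(x,y) = x^p + Σ_{k=1}^{(p−1)/2} c_k x^{p−2k} y^k + y^p with c_k = (p/(p−k))·C(p−k, k), and define g₁(x,y) = f_{p,2}(x,y) + x^p·(f_{p,2}(x,y) − 1) ∈ ℝ[x,y]. Then g₁ has non-negative coefficients, g₁(x,y) = 1 whenever x + y = 1, every pair (a,b) in the support of g₁ satisfies p ∣ a + 2b, and the support of g₁ has exactly p + 2 elements. -/

import Mathlib

open MvPolynomial Finset


noncomputable def Fp (x : ℝ) (n : ℕ) : ℝ :=
  ∑ k ∈ Finset.range (n+1), (((n-k).choose k : ℕ) : ℝ) * x^(n-2*k) * (1-x)^k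

lemma Fp_rec (x : ℝ) (n : ℕ) : Fp x (n+2) = x * Fp x (n+1) + (1-x) * Fp x n := by
  have h1 : x * Fp x (n+1)
      = ∑ k ∈ Finset.range (n+2), (((n+1-k).choose k : ℕ) : ℝ) * x^(n+2-2*k) * (1-x)^k := by
    rw [Fp, Finset.mul_sum]
    refine Finset.sum_congr rfl fun k hk => ?_
    by_cases h : 2*k ≤ n+1
    · have : n+2-2*k = (n+1-2*k)+1 := by omega
      rw [this, pow_succ]
      ring
    · have : (n+1-k).choose k = 0 := Nat.choose_eq_zero_of_lt (by omega)
      simp [this]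
  have h2 : (1-x) * Fp x n
      = ∑ j ∈ Finset.range (n+1), (((n-j).choose j : ℕ) : ℝ) * x^(n-2*j) * (1-x)^(j+1) := by
    rw [Fp, Finset.mul_sum]
    refine Finset.sum_congr rfl fun k hk => ?_
    rw [pow_succ]
    ring
  rw [h1, h2, Fp]
  rw [Finset.sum_range_succ (n := n+2)]
  have hz : ((n+2-(n+2)).choose (n+2) : ℝ) = 0 := by
    simp [Nat.choose_eq_zero_of_lt]
  rw [hz]
  rw [Finset.sum_range_succ' _ (n+1)]
  rw [Finset.sum_range_succ' _ (n+1)]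
  simp only [Nat.sub_zero, Nat.mul_zero, pow_zero]
  have key : ∀ j ∈ Finset.range (n+1),
      (((n+2-(j+1)).choose (j+1) : ℕ) : ℝ) * x^(n+2-2*(j+1)) * (1-x)^(j+1)
      = (((n+1-(j+1)).choose (j+1) : ℕ) : ℝ) * x^(n+2-2*(j+1)) * (1-x)^(j+1)
        + (((n-j).choose j : ℕ) : ℝ) * x^(n-2*j) * (1-x)^(j+1) := by
    intro j hj
    simp only [Finset.mem_range] at hj
    have e1 : n+2-(j+1) = (n-j)+1 := by omega
    have e2 : n+1-(j+1) = n-j := by omega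
    have e3 : n+2-2*(j+1) = n-2*j := by omega
    rw [e1, e2, e3, Nat.choose_succ_succ (n-j) j]
    push_cast
    ring
  rw [Finset.sum_congr rfl key, Finset.sum_add_distrib]
  simp only [Nat.choose_zero_right, Nat.cast_one]
  ring

lemma Fp_eq_geom (x : ℝ) (n : ℕ) : Fp x n = ∑ i ∈ Finset.range (n+1), (x-1)^i := by
  induction n using Nat.twoStepInduction with
  | zero => simp [Fp]
  | one => simp [Fp, Finset.sum_range_succ]
  | more n ih1 ih2 =>
    rw [Fp_rec, ih1, ih2]
    rw [Finset.sum_range_succ (n := n+2), Finset.sum_range_succ (n := n+1)]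
    ring

lemma choose_nat_key (p m k : ℕ) (hm : p = 2*m+1) (hk1 : 1 ≤ k) (hk2 : k ≤ m) :
    p * (p-k).choose k = (p-k) * ((p-k).choose k + (p-k-1).choose (k-1)) := by
  obtain ⟨a, ha⟩ : ∃ a, p = a + k := ⟨p-k, by omega⟩
  subst ha
  simp only [Nat.add_sub_cancel]
  have h := Nat.add_one_mul_choose_eq (a-1) (k-1)
  rw [show a-1+1 = a by omega, show k-1+1 = k by omega] at h
  rw [Nat.add_mul, Nat.mul_add, h]
  ring

lemma coeff_split (p m k : ℕ) (hm : p = 2*m+1) (hk1 : 1 ≤ k) (hk2 : k ≤ m) :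
    (p:ℝ)/((p:ℝ)-(k:ℝ)) * (((p-k).choose k : ℕ) : ℝ)
      = (((p-k).choose k : ℕ) : ℝ) + (((p-k-1).choose (k-1) : ℕ) : ℝ) := by
  have hb : (p:ℝ) - (k:ℝ) ≠ 0 := by
    have : (k:ℝ) < (p:ℝ) := by exact_mod_cast (by omega : k < p)
    linarith
  have hc := congrArg (Nat.cast : ℕ → ℝ) (choose_nat_key p m k hm hk1 hk2)
  push_cast [Nat.cast_sub (by omega : k ≤ p)] at hc
  field_simp
  linear_combination hc

lemma eval_key (p m : ℕ) (hm : p = 2*m+1) (hm1 : 1 ≤ m) (x y : ℝ) (hxy : x + y = 1) :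
    x^p + (∑ k ∈ Finset.Icc 1 m,
      (p:ℝ)/((p:ℝ)-(k:ℝ)) * (((p-k).choose k : ℕ) : ℝ) * x^(p-2*k) * y^k) + y^p = 1 := by
  have hy : y = 1 - x := by linarith
  subst hy
  set q : ℕ := 2*(m-1)+1 with hq
  have hpq : p = q + 2 := by omega
  -- split the sum
  have hsum : (∑ k ∈ Finset.Icc 1 m,
      (p:ℝ)/((p:ℝ)-(k:ℝ)) * (((p-k).choose k : ℕ) : ℝ) * x^(p-2*k) * (1-x)^k)
    = (∑ k ∈ Finset.Icc 1 m, (((p-k).choose k : ℕ) : ℝ) * x^(p-2*k) * (1-x)^k)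
      + (∑ k ∈ Finset.Icc 1 m, (((p-k-1).choose (k-1) : ℕ) : ℝ) * x^(p-2*k) * (1-x)^k) := by
    rw [← Finset.sum_add_distrib]
    refine Finset.sum_congr rfl fun k hk => ?_
    simp only [Finset.mem_Icc] at hk
    rw [coeff_split p m k hm hk.1 hk.2]
    ring
  rw [hsum]
  -- first sum plus x^p is Fp x p
  have h1 : x^p + (∑ k ∈ Finset.Icc 1 m, (((p-k).choose k : ℕ) : ℝ) * x^(p-2*k) * (1-x)^k)
      = Fp x p := by
    rw [Fp]
    have hsub : Finset.Icc 0 m ⊆ Finset.range (p+1) := by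
      intro k hk; simp only [Finset.mem_Icc, Finset.mem_range] at *; omega
    rw [← Finset.sum_subset hsub (fun k hk hk2 => by
      simp only [Finset.mem_Icc, Finset.mem_range] at *
      have : (p-k).choose k = 0 := Nat.choose_eq_zero_of_lt (by omega)
      simp [this])]
    have : Finset.Icc 0 m = insert 0 (Finset.Icc 1 m) := by
      ext k; simp [Finset.mem_Icc, Finset.mem_insert]; omega
    rw [this, Finset.sum_insert (by simp)]
    simp
  -- second sum is (1-x) * Fp x q
  have h2 : (∑ k ∈ Finset.Icc 1 m, (((p-k-1).choose (k-1) : ℕ) : ℝ) * x^(p-2*k) * (1-x)^k)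
      = (1-x) * Fp x q := by
    have himg : Finset.Icc 1 m = Finset.image (fun j => j + 1) (Finset.range m) := by
      ext k; simp only [Finset.mem_Icc, Finset.mem_image, Finset.mem_range]
      constructor
      · intro hk; exact ⟨k-1, by omega, by omega⟩
      · rintro ⟨j, hj, rfl⟩; omega
    rw [himg, Finset.sum_image (fun a _ b _ h => by omega)]
    have : ∀ j ∈ Finset.range m,
        (((p-(j+1)-1).choose ((j+1)-1) : ℕ) : ℝ) * x^(p-2*(j+1)) * (1-x)^(j+1)
        = (1-x) * ((((q-j).choose j : ℕ) : ℝ) * x^(q-2*j) * (1-x)^j) := by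
      intro j hj
      have e1 : p-(j+1)-1 = q-j := by omega
      have e2 : (j+1)-1 = j := by omega
      have e3 : p-2*(j+1) = q-2*j := by omega
      rw [e1, e2, e3, pow_succ]
      ring
    rw [Finset.sum_congr rfl this, ← Finset.mul_sum, Fp]
    congr 1
    refine Finset.sum_subset (fun j hj => by
      simp only [Finset.mem_range] at *; omega) (fun j hj hj2 => ?_)
    simp only [Finset.mem_range] at *
    have : (q-j).choose j = 0 := Nat.choose_eq_zero_of_lt (by omega)
    simp [this]
  have h3 : Fp x p + (1-x) * Fp x q + (1-x)^p = 1 := by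
    rw [Fp_eq_geom, Fp_eq_geom, hpq]
    rw [Finset.sum_range_succ' (fun i => (x-1)^i) (q+2)]
    rw [Finset.sum_range_succ (fun i => (x-1)^(i+1)) (q+1)]
    have hoddq : Odd (q+2) := by refine ⟨q/2 + 1, by omega⟩
    have hneg : (1-x)^(q+2) = -((x-1)^(q+2)) := by
      rw [show (1-x) = -(x-1) by ring, hoddq.neg_pow]
    rw [hneg, Finset.mul_sum]
    have : ∀ i ∈ Finset.range (q+1), (1-x) * (x-1)^i = -((x-1)^(i+1)) := by
      intro i _; rw [pow_succ]; ring
    rw [Finset.sum_congr rfl this, Finset.sum_neg_distrib]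
    ring
  linarith [h1, h2, h3]


noncomputable def mk2 (a b : ℕ) : Fin 2 →₀ ℕ := Finsupp.single 0 a + Finsupp.single 1 b

lemma mk2_apply0 (a b : ℕ) : mk2 a b 0 = a := by
  simp [mk2, Finsupp.single_apply]

lemma mk2_apply1 (a b : ℕ) : mk2 a b 1 = b := by
  simp [mk2, Finsupp.single_apply]

lemma mk2_inj {a b a' b' : ℕ} : mk2 a b = mk2 a' b' ↔ a = a' ∧ b = b' := by
  constructor
  · intro h
    constructor
    · have := DFunLike.congr_fun h 0; simpa [mk2_apply0] using this
    · have := DFunLike.congr_fun h 1; simpa [mk2_apply1] using this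
  · rintro ⟨rfl, rfl⟩; rfl

lemma mk2_add (a b a' b' : ℕ) : mk2 a b + mk2 a' b' = mk2 (a+a') (b+b') := by
  simp only [mk2, Finsupp.single_add]
  abel

lemma mono_eq (a b : ℕ) (r : ℝ) :
    C r * (X 0 : MvPolynomial (Fin 2) ℝ) ^ a * (X 1) ^ b = monomial (mk2 a b) r := by
  rw [X_pow_eq_monomial, X_pow_eq_monomial, C_apply, monomial_mul, monomial_mul, mk2]
  simp

lemma xpow_eq (a : ℕ) : (X 0 : MvPolynomial (Fin 2) ℝ) ^ a = monomial (mk2 a 0) 1 := by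
  rw [X_pow_eq_monomial, mk2]; simp

lemma ypow_eq (b : ℕ) : (X 1 : MvPolynomial (Fin 2) ℝ) ^ b = monomial (mk2 0 b) 1 := by
  rw [X_pow_eq_monomial, mk2]; simp

noncomputable def RHSpoly (p m : ℕ) (c : ℕ → ℝ) : MvPolynomial (Fin 2) ℝ :=
  ((∑ k ∈ Finset.Icc 1 m, monomial (mk2 (p-2*k) k) (c k))
    + (∑ k ∈ Finset.Icc 1 m, monomial (mk2 (2*p-2*k) k) (c k)))
  + (monomial (mk2 0 p) 1 + monomial (mk2 (2*p) 0) 1 + monomial (mk2 p p) 1)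

lemma g1_rep (p m : ℕ) (hm : p = 2*m+1) (c : ℕ → ℝ) :
    ((X 0)^p + (∑ k ∈ Finset.Icc 1 ((p-1)/2), C (c k) * (X 0)^(p-2*k) * (X 1)^k) + (X 1)^p)
      + (X 0)^p * (((X 0)^p + (∑ k ∈ Finset.Icc 1 ((p-1)/2),
          C (c k) * (X 0)^(p-2*k) * (X 1)^k) + (X 1)^p) - 1)
      = RHSpoly p m c := by
  have hb : (p-1)/2 = m := by omega
  rw [hb]
  have hS : (∑ k ∈ Finset.Icc 1 m, C (c k) * (X 0 : MvPolynomial (Fin 2) ℝ)^(p-2*k) * (X 1)^k)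
      = ∑ k ∈ Finset.Icc 1 m, monomial (mk2 (p-2*k) k) (c k) :=
    Finset.sum_congr rfl fun k _ => mono_eq _ _ _
  have e1 : (X 0 : MvPolynomial (Fin 2) ℝ)^p * (∑ k ∈ Finset.Icc 1 m, monomial (mk2 (p-2*k) k) (c k))
      = ∑ k ∈ Finset.Icc 1 m, monomial (mk2 (2*p-2*k) k) (c k) := by
    rw [Finset.mul_sum]
    refine Finset.sum_congr rfl fun k hk => ?_
    simp only [Finset.mem_Icc] at hk
    rw [xpow_eq, monomial_mul, one_mul, mk2_add]
    have hd : mk2 (p + (p-2*k)) (0 + k) = mk2 (2*p-2*k) k := mk2_inj.mpr ⟨by omega, by omega⟩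
    rw [hd]
  have e2 : (X 0 : MvPolynomial (Fin 2) ℝ)^p * (X 1)^p = monomial (mk2 p p) 1 := by
    rw [xpow_eq, ypow_eq, monomial_mul, one_mul, mk2_add]
    norm_num
  have e3 : (X 0 : MvPolynomial (Fin 2) ℝ)^p * (X 0)^p = monomial (mk2 (2*p) 0) 1 := by
    rw [xpow_eq, monomial_mul, one_mul, mk2_add]
    have hd : mk2 (p + p) (0 + 0) = mk2 (2*p) 0 := mk2_inj.mpr ⟨by omega, by omega⟩
    rw [hd]
  rw [hS, ypow_eq]
  rw [show ∀ A S Y : MvPolynomial (Fin 2) ℝ,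
      (A + S + Y) + A * ((A + S + Y) - 1) = (S + A * S) + (Y + A * A + A * Y)
      from fun A S Y => by ring]
  rw [e1, e3]
  rw [show (X 0 : MvPolynomial (Fin 2) ℝ)^p * monomial (mk2 0 p) 1 = monomial (mk2 p p) 1 from by
    rw [xpow_eq, monomial_mul, one_mul, mk2_add]; norm_num]
  rw [RHSpoly]

lemma coeff_RHS (p m : ℕ) (c : ℕ → ℝ) (α : Fin 2 →₀ ℕ) :
    coeff α (RHSpoly p m c)
      = ((∑ k ∈ Finset.Icc 1 m, if mk2 (p-2*k) k = α then c k else 0)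
        + (∑ k ∈ Finset.Icc 1 m, if mk2 (2*p-2*k) k = α then c k else 0))
      + ((if mk2 0 p = α then (1:ℝ) else 0) + (if mk2 (2*p) 0 = α then (1:ℝ) else 0)
        + (if mk2 p p = α then (1:ℝ) else 0)) := by
  simp only [RHSpoly, coeff_add, MvPolynomial.coeff_sum, coeff_monomial]

noncomputable def Dset (p m : ℕ) : Finset (Fin 2 →₀ ℕ) :=
  (((Finset.Icc 1 m).image fun k => mk2 (p-2*k) k)
    ∪ ((Finset.Icc 1 m).image fun k => mk2 (2*p-2*k) k))
  ∪ {mk2 0 p, mk2 (2*p) 0, mk2 p p}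

lemma support_RHS (p m : ℕ) (hm : p = 2*m+1) (hm1 : 1 ≤ m) (c : ℕ → ℝ)
    (hc : ∀ k ∈ Finset.Icc 1 m, c k ≠ 0) :
    (RHSpoly p m c).support = Dset p m := by
  ext α
  rw [mem_support_iff, coeff_RHS]
  simp only [Dset, Finset.mem_union, Finset.mem_image, Finset.mem_insert,
    Finset.mem_singleton, Finset.mem_Icc]
  constructor
  · intro h
    by_contra hα
    push_neg at hα
    obtain ⟨⟨h1, h2⟩, h3, h4, h5⟩ := hα
    apply h
    have z1 : (∑ k ∈ Finset.Icc 1 m, if mk2 (p-2*k) k = α then c k else 0) = 0 :=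
      Finset.sum_eq_zero fun k hk => if_neg (h1 k (Finset.mem_Icc.mp hk))
    have z2 : (∑ k ∈ Finset.Icc 1 m, if mk2 (2*p-2*k) k = α then c k else 0) = 0 :=
      Finset.sum_eq_zero fun k hk => if_neg (h2 k (Finset.mem_Icc.mp hk))
    rw [z1, z2, if_neg (fun hh => h3 hh.symm), if_neg (fun hh => h4 hh.symm),
      if_neg (fun hh => h5 hh.symm)]
    ring
  · intro hα
    rcases hα with (⟨k₀, hk₀, rfl⟩ | ⟨k₀, hk₀, rfl⟩) | (h | h | h)
    · have z1 : (∑ k ∈ Finset.Icc 1 m, if mk2 (p-2*k) k = mk2 (p-2*k₀) k₀ then c k else 0)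
          = c k₀ :=
        (Finset.sum_eq_single_of_mem k₀ (Finset.mem_Icc.mpr hk₀) (fun k hk hne =>
          if_neg (by simp only [Finset.mem_Icc] at hk; rw [mk2_inj]; omega))).trans (if_pos rfl)
      have z2 : (∑ k ∈ Finset.Icc 1 m, if mk2 (2*p-2*k) k = mk2 (p-2*k₀) k₀ then c k else 0)
          = 0 := by
        refine Finset.sum_eq_zero fun k hk => ?_
        simp only [Finset.mem_Icc] at hk
        exact if_neg (by rw [mk2_inj]; omega)
      rw [z1, z2, if_neg (by rw [mk2_inj]; omega), if_neg (by rw [mk2_inj]; omega),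
        if_neg (by rw [mk2_inj]; omega)]
      simpa using hc k₀ (Finset.mem_Icc.mpr hk₀)
    · have z1 : (∑ k ∈ Finset.Icc 1 m, if mk2 (p-2*k) k = mk2 (2*p-2*k₀) k₀ then c k else 0)
          = 0 := by
        refine Finset.sum_eq_zero fun k hk => ?_
        simp only [Finset.mem_Icc] at hk
        exact if_neg (by rw [mk2_inj]; omega)
      have z2 : (∑ k ∈ Finset.Icc 1 m, if mk2 (2*p-2*k) k = mk2 (2*p-2*k₀) k₀ then c k else 0)
          = c k₀ :=
        (Finset.sum_eq_single_of_mem k₀ (Finset.mem_Icc.mpr hk₀) (fun k hk hne =>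
          if_neg (by simp only [Finset.mem_Icc] at hk; rw [mk2_inj]; omega))).trans (if_pos rfl)
      rw [z1, z2, if_neg (by rw [mk2_inj]; omega), if_neg (by rw [mk2_inj]; omega),
        if_neg (by rw [mk2_inj]; omega)]
      simpa using hc k₀ (Finset.mem_Icc.mpr hk₀)
    · subst h
      have z1 : (∑ k ∈ Finset.Icc 1 m, if mk2 (p-2*k) k = mk2 0 p then c k else 0) = 0 := by
        refine Finset.sum_eq_zero fun k hk => ?_
        simp only [Finset.mem_Icc] at hk
        exact if_neg (by rw [mk2_inj]; omega)
      have z2 : (∑ k ∈ Finset.Icc 1 m, if mk2 (2*p-2*k) k = mk2 0 p then c k else 0) = 0 := by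
        refine Finset.sum_eq_zero fun k hk => ?_
        simp only [Finset.mem_Icc] at hk
        exact if_neg (by rw [mk2_inj]; omega)
      rw [z1, z2, if_pos rfl, if_neg (by rw [mk2_inj]; omega),
        if_neg (by rw [mk2_inj]; omega)]
      norm_num
    · subst h
      have z1 : (∑ k ∈ Finset.Icc 1 m, if mk2 (p-2*k) k = mk2 (2*p) 0 then c k else 0) = 0 := by
        refine Finset.sum_eq_zero fun k hk => ?_
        simp only [Finset.mem_Icc] at hk
        exact if_neg (by rw [mk2_inj]; omega)
      have z2 : (∑ k ∈ Finset.Icc 1 m, if mk2 (2*p-2*k) k = mk2 (2*p) 0 then c k else 0) = 0 := by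
        refine Finset.sum_eq_zero fun k hk => ?_
        simp only [Finset.mem_Icc] at hk
        exact if_neg (by rw [mk2_inj]; omega)
      rw [z1, z2, if_pos rfl, if_neg (by rw [mk2_inj]; omega),
        if_neg (by rw [mk2_inj]; omega)]
      norm_num
    · subst h
      have z1 : (∑ k ∈ Finset.Icc 1 m, if mk2 (p-2*k) k = mk2 p p then c k else 0) = 0 := by
        refine Finset.sum_eq_zero fun k hk => ?_
        simp only [Finset.mem_Icc] at hk
        exact if_neg (by rw [mk2_inj]; omega)
      have z2 : (∑ k ∈ Finset.Icc 1 m, if mk2 (2*p-2*k) k = mk2 p p then c k else 0) = 0 := by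
        refine Finset.sum_eq_zero fun k hk => ?_
        simp only [Finset.mem_Icc] at hk
        exact if_neg (by rw [mk2_inj]; omega)
      rw [z1, z2, if_pos rfl, if_neg (by rw [mk2_inj]; omega),
        if_neg (by rw [mk2_inj]; omega)]
      norm_num

lemma card_Dset (p m : ℕ) (hm : p = 2*m+1) (hm1 : 1 ≤ m) :
    (Dset p m).card = p + 2 := by
  have hi1 : ((Finset.Icc 1 m).image fun k => mk2 (p-2*k) k).card = m := by
    rw [Finset.card_image_of_injOn (fun a ha b hb hab => by
      simp only [Finset.mem_coe, Finset.mem_Icc] at ha hb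
      have := mk2_inj.mp hab
      omega)]
    simp
  have hi2 : ((Finset.Icc 1 m).image fun k => mk2 (2*p-2*k) k).card = m := by
    rw [Finset.card_image_of_injOn (fun a ha b hb hab => by
      simp only [Finset.mem_coe, Finset.mem_Icc] at ha hb
      have := mk2_inj.mp hab
      omega)]
    simp
  have hd12 : Disjoint ((Finset.Icc 1 m).image fun k => mk2 (p-2*k) k)
      ((Finset.Icc 1 m).image fun k => mk2 (2*p-2*k) k) := by
    rw [Finset.disjoint_left]
    intro α hα1 hα2
    rw [Finset.mem_image] at hα1 hα2
    obtain ⟨k, hk, rfl⟩ := hα1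
    obtain ⟨j, hj, hje⟩ := hα2
    simp only [Finset.mem_Icc] at hk hj
    have := mk2_inj.mp hje
    omega
  have hd3 : Disjoint
      ((((Finset.Icc 1 m).image fun k => mk2 (p-2*k) k)
        ∪ ((Finset.Icc 1 m).image fun k => mk2 (2*p-2*k) k)))
      ({mk2 0 p, mk2 (2*p) 0, mk2 p p} : Finset (Fin 2 →₀ ℕ)) := by
    rw [Finset.disjoint_left]
    intro α hα hmem
    simp only [Finset.mem_insert, Finset.mem_singleton] at hmem
    rw [Finset.mem_union, Finset.mem_image, Finset.mem_image] at hα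
    rcases hα with ⟨k, hk, rfl⟩ | ⟨k, hk, rfl⟩ <;>
      simp only [Finset.mem_Icc] at hk <;>
      rcases hmem with h | h | h <;> (have := mk2_inj.mp h; omega)
  have hc3 : ({mk2 0 p, mk2 (2*p) 0, mk2 p p} : Finset (Fin 2 →₀ ℕ)).card = 3 := by
    rw [Finset.card_insert_of_notMem (by
        simp only [Finset.mem_insert, Finset.mem_singleton]
        rintro (h | h) <;> (have := mk2_inj.mp h; omega)),
      Finset.card_insert_of_notMem (by
        simp only [Finset.mem_singleton]
        intro h; have := mk2_inj.mp h; omega)]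
    rfl
  rw [Dset, Finset.card_union_of_disjoint hd3, Finset.card_union_of_disjoint hd12,
    hi1, hi2, hc3]
  omega
noncomputable def cdef (p : ℕ) : ℕ → ℝ :=
  fun k => (p : ℝ) / ((p : ℝ) - (k : ℝ)) * ((p - k).choose k : ℝ)

noncomputable def fdef (p : ℕ) : MvPolynomial (Fin 2) ℝ :=
  (X 0) ^ p + (∑ k ∈ Finset.Icc 1 ((p - 1) / 2),
    C (cdef p k) * (X 0) ^ (p - 2 * k) * (X 1) ^ k) + (X 1) ^ p

noncomputable def g1def (p : ℕ) : MvPolynomial (Fin 2) ℝ :=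
  fdef p + (X 0) ^ p * (fdef p - 1)

/-- With `f = f_{p,2}` the canonical `Γ(p,2)`-invariant polynomial, the polynomial
`g₁ = f + x^p·(f − 1)` has non-negative coefficients, equals `1` on `x + y = 1`,
is `Γ(p,2)`-invariant (`p ∣ a + 2b` on its support), and has rank `p + 2`. -/
theorem stmt_9 (p : ℕ) (hp : 3 ≤ p) (hodd : Odd p) :
    letI c : ℕ → ℝ := fun k => (p : ℝ) / ((p : ℝ) - (k : ℝ)) * ((p - k).choose k : ℝ)
    letI f : MvPolynomial (Fin 2) ℝ :=
      (X 0) ^ p + (∑ k ∈ Finset.Icc 1 ((p - 1) / 2),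
        C (c k) * (X 0) ^ (p - 2 * k) * (X 1) ^ k) + (X 1) ^ p
    letI g1 : MvPolynomial (Fin 2) ℝ := f + (X 0) ^ p * (f - 1)
    (∀ α, 0 ≤ g1.coeff α) ∧
    (∀ x y : ℝ, x + y = 1 → eval ![x, y] g1 = 1) ∧
    (∀ α ∈ g1.support, p ∣ α 0 + 2 * α 1) ∧
    g1.support.card = p + 2 := by
  obtain ⟨m, hm0⟩ := hodd
  have hm : p = 2*m+1 := by omega
  have hm1 : 1 ≤ m := by omega
  have hrep : g1def p = RHSpoly p m (cdef p) := g1_rep p m hm (cdef p)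
  have hcpos : ∀ k ∈ Finset.Icc 1 m, 0 < cdef p k := by
    intro k hk
    simp only [Finset.mem_Icc] at hk
    refine mul_pos (div_pos ?_ ?_) ?_
    · exact_mod_cast (by omega : 0 < p)
    · have : (k:ℝ) < (p:ℝ) := by exact_mod_cast (by omega : k < p)
      linarith
    · exact_mod_cast Nat.choose_pos (by omega : k ≤ p - k)
  have h1 : ∀ α, 0 ≤ (g1def p).coeff α := by
    intro α
    rw [hrep, coeff_RHS]
    have hif : ∀ (P : Prop) [Decidable P], (0:ℝ) ≤ if P then 1 else 0 := by
      intro P _; split_ifs <;> norm_num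
    refine add_nonneg (add_nonneg ?_ ?_) (add_nonneg (add_nonneg (hif _) (hif _)) (hif _)) <;>
    · refine Finset.sum_nonneg fun k hk => ?_
      split_ifs
      · exact (hcpos k hk).le
      · exact le_refl 0
  have h2 : ∀ x y : ℝ, x + y = 1 → eval ![x, y] (g1def p) = 1 := by
    intro x y hxy
    have hf : eval ![x, y] (fdef p) = 1 := by
      rw [fdef, show (p-1)/2 = m by omega]
      simp only [map_add, map_pow, eval_X, map_sum, map_mul, eval_C,
        Matrix.cons_val_zero, Matrix.cons_val_one, Matrix.head_cons]
      exact eval_key p m hm hm1 x y hxy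
    rw [g1def]
    simp only [map_add, map_mul, map_sub, map_one, map_pow, eval_X, hf]
    ring
  have h3 : ∀ α ∈ (g1def p).support, p ∣ α 0 + 2 * α 1 := by
    intro α hα
    rw [hrep, support_RHS p m hm hm1 _ (fun k hk => (hcpos k hk).ne')] at hα
    simp only [Dset, Finset.mem_union, Finset.mem_image, Finset.mem_insert,
      Finset.mem_singleton, Finset.mem_Icc] at hα
    rcases hα with (⟨k, hk, rfl⟩ | ⟨k, hk, rfl⟩) | (rfl | rfl | rfl) <;>
      rw [mk2_apply0, mk2_apply1]
    · exact ⟨1, by omega⟩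
    · exact ⟨2, by omega⟩
    · exact ⟨2, by omega⟩
    · exact ⟨2, by omega⟩
    · exact ⟨3, by omega⟩
  have h4 : (g1def p).support.card = p + 2 := by
    rw [hrep, support_RHS p m hm hm1 _ (fun k hk => (hcpos k hk).ne')]
    exact card_Dset p m hm hm1
  exact ⟨h1, h2, h3, h4⟩
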